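/- Let G be a continuous semigroup on a topological space X generated by a family S of continuous self-maps, with G* = G \ S, and let x, y ∈ X. Suppose there is a sequence (f_k) of elements of G such that f_k(x) → y as k → ∞, and such that for every index N there exist an index m > N and some g ∈ G* with f_m = g ∘ f_N. Then y is a nonwandering point for G. -/
import Mathlib

/-- `x` is a nonwandering point for a semigroup `G` generated by the family `S`
(`G* = G \ S`): every neighborhood `U` of `x` satisfies `g(U) ∩ U ≠ ∅` for some `g ∈ G*`. -/
def Nonwandering {X : Type*} [TopologicalSpace X] (G S : Set (X → X)) (x : X) : Prop :=
  ∀ U ∈ nhds x, ∃ g ∈ G \ S, ((g '' U) ∩ U).Nonempty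

/-- Let `G` be a continuous semigroup generated by `S`, with `G* = G \ S`, and `x, y ∈ X`.
If there is a sequence `(f k)` in `G` with `f k x → y`, such that for every `N` there are
`m > N` and `g ∈ G*` with `f m = g ∘ f N`, then `y` is a nonwandering point for `G`. -/
theorem omegaLimit_mem_nonwandering {X : Type*} [TopologicalSpace X] (G S : Set (X → X))
    (hScont : ∀ s ∈ S, Continuous s)
    (hcont : ∀ g ∈ G, Continuous g)
    (hcomp : ∀ g ∈ G, ∀ h ∈ G, g ∘ h ∈ G)
    (hSG : S ⊆ G)
    (hgen : ∀ g ∈ G, ∃ l : List (X → X), l ≠ [] ∧ (∀ f ∈ l, f ∈ S) ∧ g = l.foldr (· ∘ ·) id)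
    (x y : X) (f : ℕ → X → X)
    (hfG : ∀ k, f k ∈ G)
    (hlim : Filter.Tendsto (fun k => f k x) Filter.atTop (nhds y))
    (hchain : ∀ N : ℕ, ∃ m > N, ∃ g ∈ G \ S, f m = g ∘ f N) :
    Nonwandering G S y := by
  intro U hU
  have hev : ∀ᶠ k in Filter.atTop, f k x ∈ U := hlim.eventually_mem hU
  obtain ⟨K, hK⟩ := Filter.eventually_atTop.mp hev
  obtain ⟨m, hm, g, hg, hfm⟩ := hchain K
  refine ⟨g, hg, f m x, ?_, hK m hm.le⟩
  rw [hfm]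
  exact Set.mem_image_of_mem g (hK K le_rfl)
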